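/- The characteristic polynomial of the adjacency matrix of Γ(Z/p^3 Z) equals ±λ^(p^2 - 3) · (λ^2 − (p−1)λ − (p^2 − p)(p−1)). -/

import Mathlib

set_option maxHeartbeats 1000000
set_option synthInstance.maxHeartbeats 1000000

open scoped Classical
open Polynomial

/-- Adjacency matrix of the zero divisor graph of `ZMod n` (with diagonal entry `1` at
self-annihilating vertices): `M x y = 1` iff `x * y = 0`. -/
noncomputable def zdAdjMatrix (n : ℕ) :
    Matrix {x : ZMod n // x ≠ 0 ∧ ∃ y ≠ 0, x * y = 0}
      {x : ZMod n // x ≠ 0 ∧ ∃ y ≠ 0, x * y = 0} ℝ :=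
  fun x y => if (x : ZMod n) * (y : ZMod n) = 0 then 1 else 0

open Matrix
section CP
variable {m K : Type*} [Fintype m] [DecidableEq m] [Field K]

lemma charpoly_vecMulVec_add (a b c d : m → K) (h2 : 2 ≤ Fintype.card m) :
    (vecMulVec a b + vecMulVec c d).charpoly =
      X ^ (Fintype.card m - 2) *
        (X ^ 2 - C ((∑ i, a i * b i) + (∑ i, c i * d i)) * X
          + C ((∑ i, a i * b i) * (∑ i, c i * d i) - (∑ i, b i * c i) * (∑ i, d i * a i))) := by
  classical
  set M := vecMulVec a b + vecMulVec c d with hM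
  set n := Fintype.card m with hn
  set φ : K[X] →+* RatFunc K := (algebraMap K[X] (RatFunc K)) with hφ
  have hinj : Function.Injective φ := IsFractionRing.injective K[X] (RatFunc K)
  apply hinj
  set ψ : K →+* RatFunc K := φ.comp (C : K →+* K[X]) with hψ
  set x : RatFunc K := φ X with hx
  have hx0 : x ≠ 0 := by
    simp only [hx]
    intro h
    exact X_ne_zero (hinj (by simpa using h))
  have hdet : φ M.charpoly = ((charmatrix M).map φ).det := by
    rw [Matrix.charpoly, RingHom.map_det, RingHom.mapMatrix_apply]
  set A2 : Matrix m (Fin 2) (RatFunc K) := of fun i j => ψ (if j = 0 then a i else c i) with hA2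
  set B2 : Matrix (Fin 2) m (RatFunc K) :=
    of fun j i => -(x⁻¹ * ψ (if j = 0 then b i else d i)) with hB2
  have key : (charmatrix M).map φ = x • (1 + A2 * B2) := by
    ext i k
    by_cases h : i = k
    · subst h
      simp only [Matrix.map_apply, charmatrix_apply_eq, Matrix.smul_apply, Matrix.add_apply,
        Matrix.one_apply_eq, Matrix.mul_apply, Fin.sum_univ_two, hA2, hB2, Matrix.of_apply,
        hM, Matrix.add_apply, vecMulVec_apply, map_sub, _root_.map_add, _root_.map_mul,
        smul_eq_mul, if_pos rfl, if_neg (by decide : (1:Fin 2) ≠ 0), ↓reduceIte]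
      have : ∀ r : K, φ (C r) = ψ r := fun r => rfl
      rw [this, this, this, this]
      field_simp
      ring
    · simp only [Matrix.map_apply, charmatrix_apply_ne _ _ _ h, Matrix.smul_apply,
        Matrix.add_apply, Matrix.one_apply_ne h, Matrix.mul_apply, Fin.sum_univ_two, hA2, hB2,
        Matrix.of_apply, hM, vecMulVec_apply, _root_.map_add, _root_.map_mul,
        smul_eq_mul, if_pos rfl, if_neg (by decide : (1:Fin 2) ≠ 0), map_neg, ↓reduceIte]
      have : ∀ r : K, φ (C r) = ψ r := fun r => rfl
      rw [this, this, this, this]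
      field_simp
      ring
  rw [hdet, key, Matrix.det_smul, Matrix.det_one_add_mul_comm]
  have hB2A2 : ∀ j k, (B2 * A2) j k = -(x⁻¹ * ψ (∑ i,
      (if j = 0 then b i else d i) * (if k = 0 then a i else c i))) := by
    intro j k
    simp only [Matrix.mul_apply, hA2, hB2, Matrix.of_apply, map_sum, _root_.map_mul,
      Finset.mul_sum]
    rw [← Finset.sum_neg_distrib]
    exact Finset.sum_congr rfl fun i _ => by ring
  rw [Matrix.det_fin_two]
  simp only [Matrix.add_apply, Matrix.one_apply_eq, Matrix.one_apply_ne (by decide : (0:Fin 2) ≠ 1),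
    Matrix.one_apply_ne (by decide : (1:Fin 2) ≠ 0), hB2A2]
  simp only [if_pos rfl, if_neg (by decide : (1:Fin 2) ≠ 0), if_true]
  simp only [map_pow, map_sub, _root_.map_mul, _root_.map_add]
  have hC : ∀ r : K, φ (C r) = ψ r := fun r => rfl
  simp only [hC, ← hx]
  have hcomm : ∀ u v : m → K, ψ (∑ i, v i * u i) = ψ (∑ i, u i * v i) := by
    intro u v; congr 1; exact Finset.sum_congr rfl fun i _ => mul_comm _ _
  rw [hcomm a b, hcomm c d]
  have hn2 : x ^ n = x ^ (n - 2) * x ^ 2 := by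
    rw [← pow_add]; congr 1; omega
  rw [hn2]
  field_simp
  ring

end CP


section NT
variable {n : ℕ}

lemma zmod_mul_eq_zero_iff [NeZero n] (x y : ZMod n) :
    x * y = 0 ↔ n ∣ x.val * y.val := by
  have h : ((x.val * y.val : ℕ) : ZMod n) = x * y := by
    rw [Nat.cast_mul, ZMod.natCast_rightInverse x, ZMod.natCast_rightInverse y]
  rw [← h, ZMod.natCast_eq_zero_iff]

lemma card_subtype_dvd (n d k : ℕ) (hd : 0 < d) (hk : 0 < k) (hn : n = d * k)
    [NeZero n] :
    Nat.card {x : ZMod n // d ∣ x.val} = k := by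
  subst hn
  have e : {x : ZMod (d * k) // d ∣ x.val} ≃ Fin k :=
    { toFun := fun x => ⟨x.1.val / d, (Nat.div_lt_iff_lt_mul hd).2
        (by simpa [mul_comm] using ZMod.val_lt x.1)⟩
      invFun := fun j => ⟨((d * j : ℕ) : ZMod (d * k)), by
        rw [ZMod.val_natCast, Nat.mod_eq_of_lt ((Nat.mul_lt_mul_left hd).2 j.2)]
        exact Dvd.intro _ rfl⟩
      left_inv := fun x => by
        apply Subtype.ext
        simp only []
        rw [Nat.mul_div_cancel' x.2]
        exact ZMod.natCast_rightInverse x.1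
      right_inv := fun j => by
        apply Fin.ext
        simp only []
        rw [ZMod.val_natCast, Nat.mod_eq_of_lt ((Nat.mul_lt_mul_left hd).2 j.2),
          Nat.mul_div_cancel_left _ hd] }
  rw [Nat.card_congr e, Nat.card_eq_fintype_card, Fintype.card_fin]

lemma card_subtype_nonzero_dvd (n d k : ℕ) (hd : 0 < d) (hk : 0 < k) (hn : n = d * k)
    [NeZero n] :
    Nat.card {x : ZMod n // x ≠ 0 ∧ d ∣ x.val} = k - 1 := by
  classical
  have h1 : Nat.card {x : ZMod n // d ∣ x.val} = k :=
    card_subtype_dvd n d k hd hk hn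
  rw [Nat.card_eq_fintype_card, Fintype.card_subtype] at h1 ⊢
  have heq : (Finset.univ.filter (fun x : ZMod n => x ≠ 0 ∧ d ∣ x.val)) =
      (Finset.univ.filter (fun x : ZMod n => d ∣ x.val)).erase 0 := by
    ext x
    simp only [Finset.mem_erase, Finset.mem_filter, Finset.mem_univ, true_and]
  rw [heq, Finset.card_erase_of_mem (by simp [ZMod.val_zero]), h1]

end NT

section P
variable (p : ℕ) [hp : Fact p.Prime]

lemma neZero_p3 : NeZero (p ^ 3) := ⟨pow_ne_zero 3 hp.out.pos.ne'⟩

lemma vertex_iff (x : ZMod (p ^ 3)) :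
    (x ≠ 0 ∧ ∃ y ≠ 0, x * y = 0) ↔ (x ≠ 0 ∧ p ∣ x.val) := by
  haveI : NeZero (p ^ 3) := neZero_p3 p
  have h23 : p ^ 2 < p ^ 3 := Nat.pow_lt_pow_right hp.out.one_lt (by norm_num)
  constructor
  · rintro ⟨hx0, y, hy0, hxy⟩
    refine ⟨hx0, ?_⟩
    by_contra hpx
    have hcop : Nat.Coprime (p ^ 3) x.val :=
      Nat.Coprime.pow_left _ ((Nat.Prime.coprime_iff_not_dvd hp.out).2 hpx)
    have hdvd : p ^ 3 ∣ x.val * y.val := (zmod_mul_eq_zero_iff x y).1 hxy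
    have hdy : p ^ 3 ∣ y.val := hcop.dvd_of_dvd_mul_left hdvd
    have hy0' : y.val ≠ 0 := fun h => hy0 ((ZMod.val_eq_zero y).1 h)
    have := Nat.le_of_dvd (Nat.pos_of_ne_zero hy0') hdy
    have := ZMod.val_lt y
    omega
  · rintro ⟨hx0, k, hk⟩
    refine ⟨hx0, ((p ^ 2 : ℕ) : ZMod (p ^ 3)), ?_, ?_⟩
    · rw [Ne, ZMod.natCast_eq_zero_iff]
      intro h
      have := Nat.le_of_dvd (pow_pos hp.out.pos 2) h
      omega
    · rw [zmod_mul_eq_zero_iff, ZMod.val_natCast, Nat.mod_eq_of_lt h23, hk]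
      exact ⟨k, by ring⟩

lemma sq_zero_iff (x : ZMod (p ^ 3)) (hx : p ∣ x.val) :
    x * x = 0 ↔ p ^ 2 ∣ x.val := by
  haveI : NeZero (p ^ 3) := neZero_p3 p
  obtain ⟨a, ha⟩ := hx
  rw [zmod_mul_eq_zero_iff, ha]
  constructor
  · rintro hdvd
    have h1 : p ^ 3 ∣ p ^ 2 * (a * a) := by rw [show p^2 * (a*a) = p*a*(p*a) by ring]; exact hdvd
    have h2 : p ∣ a * a := by
      rcases h1 with ⟨c, hc⟩
      refine ⟨c, ?_⟩
      have hp2 : 0 < p ^ 2 := pow_pos hp.out.pos 2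
      have : p ^ 2 * (a * a) = p ^ 2 * (p * c) := by rw [hc]; ring
      exact Nat.eq_of_mul_eq_mul_left hp2 this
    have h3 : p ∣ a := hp.out.dvd_of_dvd_pow (n := 2) (by rwa [sq])
    obtain ⟨b, hb⟩ := h3
    exact ⟨b, by rw [hb]; ring⟩
  · rintro ⟨b, hb⟩
    have hpa : p ∣ a := by
      rcases Nat.eq_zero_or_pos p with h | h
      · exact absurd hp.out.pos (by omega)
      · have h5 : p * a = p * (p * b) := by rw [hb]; ring
        exact ⟨b, Nat.eq_of_mul_eq_mul_left h h5⟩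
    obtain ⟨c, hc⟩ := hpa
    exact ⟨p * (c * c), by rw [hc]; ring⟩

lemma adj_iff (x y : ZMod (p ^ 3)) (hx : p ∣ x.val) (hy : p ∣ y.val) :
    x * y = 0 ↔ (x * x = 0 ∨ y * y = 0) := by
  haveI : NeZero (p ^ 3) := neZero_p3 p
  rw [sq_zero_iff p x hx, sq_zero_iff p y hy, zmod_mul_eq_zero_iff]
  obtain ⟨a, ha⟩ := hx
  obtain ⟨b, hb⟩ := hy
  constructor
  · intro hdvd
    by_contra hcon
    push_neg at hcon
    obtain ⟨h1, h2⟩ := hcon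
    have hpa : ¬ p ∣ a := fun ⟨c, hc⟩ => h1 ⟨c, by rw [ha, hc]; ring⟩
    have hpb : ¬ p ∣ b := fun ⟨c, hc⟩ => h2 ⟨c, by rw [hb, hc]; ring⟩
    have h3 : p ^ 3 ∣ p ^ 2 * (a * b) := by
      rw [show p ^ 2 * (a * b) = p * a * (p * b) by ring, ← ha, ← hb]; exact hdvd
    have h4 : p ∣ a * b := by
      rcases h3 with ⟨c, hc⟩
      refine ⟨c, Nat.eq_of_mul_eq_mul_left (pow_pos hp.out.pos 2) ?_⟩
      rw [hc]; ring
    rcases (Nat.Prime.dvd_mul hp.out).1 h4 with h | h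
    · exact hpa h
    · exact hpb h
  · rintro (⟨c, hc⟩ | ⟨c, hc⟩)
    · exact ⟨c * b, by rw [hc, hb]; ring⟩
    · exact ⟨a * c, by rw [ha, hc]; ring⟩

end P

/-- The characteristic polynomial of the adjacency matrix of `Γ(ZMod (p^3))` equals
`± λ^(p^2-3) (λ^2 - (p-1)λ - (p^2-p)(p-1))`. -/
theorem charpoly_zd_graph_p_cubed (p : ℕ) [Fact p.Prime] :
    ∃ ε : ℝ, (ε = 1 ∨ ε = -1) ∧
      (zdAdjMatrix (p ^ 3)).charpoly =
        C ε * (X ^ (p ^ 2 - 3) *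
          (X ^ 2 - C ((p : ℝ) - 1) * X - C (((p : ℝ) ^ 2 - p) * ((p : ℝ) - 1)))) := by
  classical
  have hp : p.Prime := Fact.out
  have hp2 : 2 ≤ p := hp.two_le
  have hp4 : 4 ≤ p ^ 2 := by nlinarith
  have hpp : p ≤ p ^ 2 := by nlinarith
  haveI : NeZero (p ^ 3) := neZero_p3 p
  refine ⟨1, Or.inl rfl, ?_⟩
  set u : {x : ZMod (p ^ 3) // x ≠ 0 ∧ ∃ y ≠ 0, x * y = 0} → ℝ :=
    fun x => if (x : ZMod (p ^ 3)) * (x : ZMod (p ^ 3)) = 0 then 0 else 1 with hu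
  -- decompose the matrix
  have hM : zdAdjMatrix (p ^ 3) =
      vecMulVec (fun _ => (1 : ℝ)) (fun _ => 1) + vecMulVec u (fun x => -u x) := by
    ext x y
    have hx := ((vertex_iff p x.1).1 x.2).2
    have hy := ((vertex_iff p y.1).1 y.2).2
    have hadj := adj_iff p x.1 y.1 hx hy
    simp only [zdAdjMatrix, Matrix.add_apply, vecMulVec_apply, hu]
    by_cases h1 : (x : ZMod (p ^ 3)) * (x : ZMod (p ^ 3)) = 0 <;>
      by_cases h2 : (y : ZMod (p ^ 3)) * (y : ZMod (p ^ 3)) = 0 <;>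
      simp_all
  -- cardinalities
  have hcV : Fintype.card {x : ZMod (p ^ 3) // x ≠ 0 ∧ ∃ y ≠ 0, x * y = 0} = p ^ 2 - 1 := by
    rw [← Nat.card_eq_fintype_card, Nat.card_congr (Equiv.subtypeEquivRight (vertex_iff p))]
    exact card_subtype_nonzero_dvd _ p (p ^ 2) hp.pos (pow_pos hp.pos 2) (by ring)
  have hcB : Nat.card {x : {x : ZMod (p ^ 3) // x ≠ 0 ∧ ∃ y ≠ 0, x * y = 0} //
      (x : ZMod (p ^ 3)) * (x : ZMod (p ^ 3)) = 0} = p - 1 := by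
    have e1 := Equiv.subtypeSubtypeEquivSubtypeInter
      (fun x : ZMod (p ^ 3) => x ≠ 0 ∧ ∃ y ≠ 0, x * y = 0) (fun x => x * x = 0)
    have e2 : {x : ZMod (p ^ 3) // (x ≠ 0 ∧ ∃ y ≠ 0, x * y = 0) ∧ x * x = 0} ≃
        {x : ZMod (p ^ 3) // x ≠ 0 ∧ p ^ 2 ∣ x.val} := by
      refine Equiv.subtypeEquivRight fun x => ⟨?_, ?_⟩
      · rintro ⟨hv, hsq⟩
        exact ⟨hv.1, (sq_zero_iff p x ((vertex_iff p x).1 hv).2).1 hsq⟩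
      · rintro ⟨hx0, hdvd⟩
        have hpd : p ∣ x.val := dvd_trans (dvd_pow_self p two_ne_zero) hdvd
        exact ⟨(vertex_iff p x).2 ⟨hx0, hpd⟩, (sq_zero_iff p x hpd).2 hdvd⟩
    rw [Nat.card_congr (e1.trans e2)]
    exact card_subtype_nonzero_dvd _ (p ^ 2) p (pow_pos hp.pos 2) hp.pos (by ring)
  have h2card : 2 ≤ Fintype.card {x : ZMod (p ^ 3) // x ≠ 0 ∧ ∃ y ≠ 0, x * y = 0} := by
    rw [hcV]; omega
  -- the sum of u
  have hS : (∑ x : {x : ZMod (p ^ 3) // x ≠ 0 ∧ ∃ y ≠ 0, x * y = 0}, u x) = (p : ℝ) ^ 2 - p := by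
    have huv : ∀ x, u x = if ¬ ((x : ZMod (p ^ 3)) * (x : ZMod (p ^ 3)) = 0) then (1:ℝ) else 0 := by
      intro x
      by_cases h : (x : ZMod (p ^ 3)) * (x : ZMod (p ^ 3)) = 0 <;> simp [hu, h]
    rw [Finset.sum_congr rfl fun x _ => huv x, Finset.sum_boole, ← Fintype.card_subtype,
      Fintype.card_subtype_compl, hcV, ← Nat.card_eq_fintype_card, hcB]
    have h1 : p ^ 2 - 1 - (p - 1) = p ^ 2 - p := by omega
    rw [h1, Nat.cast_sub hpp, Nat.cast_pow]
  rw [hM, charpoly_vecMulVec_add _ _ _ _ h2card]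
  have e1 : (∑ i : {x : ZMod (p ^ 3) // x ≠ 0 ∧ ∃ y ≠ 0, x * y = 0}, (1:ℝ) * 1)
      = (p : ℝ) ^ 2 - 1 := by
    simp only [mul_one, Finset.sum_const, Finset.card_univ, nsmul_eq_mul, mul_one, hcV]
    rw [Nat.cast_sub (by omega), Nat.cast_pow, Nat.cast_one]
  have e2 : (∑ i : {x : ZMod (p ^ 3) // x ≠ 0 ∧ ∃ y ≠ 0, x * y = 0}, u i * (-u i))
      = -((p : ℝ) ^ 2 - p) := by
    rw [← hS, ← Finset.sum_neg_distrib]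
    refine Finset.sum_congr rfl fun x _ => ?_
    by_cases h : (x : ZMod (p ^ 3)) * (x : ZMod (p ^ 3)) = 0 <;> simp [hu, h]
  have e3 : (∑ i : {x : ZMod (p ^ 3) // x ≠ 0 ∧ ∃ y ≠ 0, x * y = 0}, (1:ℝ) * u i)
      = (p : ℝ) ^ 2 - p := by
    rw [← hS]; exact Finset.sum_congr rfl fun x _ => one_mul _
  have e4 : (∑ i : {x : ZMod (p ^ 3) // x ≠ 0 ∧ ∃ y ≠ 0, x * y = 0}, (-u i) * 1)
      = -((p : ℝ) ^ 2 - p) := by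
    rw [← hS, ← Finset.sum_neg_distrib]
    exact Finset.sum_congr rfl fun x _ => by ring
  rw [e1, e2, e3, e4, hcV]
  have hexp : p ^ 2 - 1 - 2 = p ^ 2 - 3 := by omega
  rw [hexp]
  simp only [_root_.map_one, one_mul, map_sub, map_add, _root_.map_mul, map_neg, map_pow]
  ring
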